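/- Let ζ₁ and ζ₂ be centered jointly complex Gaussian random variables with E[|ζ₂|²] ≠ 0. Then E[ζ₁/ζ₂] = E[ζ₁ \overline{ζ₂}] / E[|ζ₂|²]. -/

import Mathlib

open MeasureTheory

/-- The standard complex Gaussian distribution: density `(1/π) e^{-|z|²}`
with respect to Lebesgue measure on `ℂ`. -/
noncomputable def stdCGaussian : Measure ℂ :=
  volume.withDensity (fun z => ENNReal.ofReal ((1 / Real.pi) * Real.exp (-‖z‖ ^ 2)))

open Real Set
section std

/-- density -/
noncomputable def cgd (z : ℂ) : ℝ := (1 / Real.pi) * Real.exp (-‖z‖ ^ 2)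

lemma cgd_nonneg (z : ℂ) : 0 ≤ cgd z := by
  unfold cgd; positivity

lemma cgd_meas : Measurable fun z : ℂ => (cgd z).toNNReal := by
  apply Measurable.real_toNNReal
  unfold cgd
  exact measurable_const.mul ((measurable_norm.pow measurable_const).neg.exp)

lemma stdCGaussian_eq :
    stdCGaussian = volume.withDensity (fun z => ((cgd z).toNNReal : ENNReal)) := rfl

lemma integral_stdCGaussian (f : ℂ → ℂ) :
    ∫ z, f z ∂stdCGaussian = ∫ z, cgd z • f z := by
  rw [stdCGaussian_eq, integral_withDensity_eq_integral_smul cgd_meas]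
  refine integral_congr_ae (Filter.Eventually.of_forall fun z => ?_)
  simp only [NNReal.smul_def, Real.coe_toNNReal _ (cgd_nonneg z)]

lemma integral_stdCGaussian_real (f : ℂ → ℝ) :
    ∫ z, f z ∂stdCGaussian = ∫ z, cgd z • f z := by
  rw [stdCGaussian_eq, integral_withDensity_eq_integral_smul cgd_meas]
  refine integral_congr_ae (Filter.Eventually.of_forall fun z => ?_)
  simp only [NNReal.smul_def, Real.coe_toNNReal _ (cgd_nonneg z)]

lemma integrable_stdCGaussian_iff (f : ℂ → ℂ) :
    Integrable f stdCGaussian ↔ Integrable (fun z => cgd z • f z) volume := by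
  rw [stdCGaussian_eq, integrable_withDensity_iff_integrable_smul cgd_meas]
  constructor <;> intro h <;> refine h.congr (Filter.Eventually.of_forall fun z => ?_) <;>
    simp only [NNReal.smul_def, Real.coe_toNNReal _ (cgd_nonneg z)]

lemma integrable_stdCGaussian_iff_real (f : ℂ → ℝ) :
    Integrable f stdCGaussian ↔ Integrable (fun z => cgd z • f z) volume := by
  rw [stdCGaussian_eq, integrable_withDensity_iff_integrable_smul cgd_meas]
  constructor <;> intro h <;> refine h.congr (Filter.Eventually.of_forall fun z => ?_) <;>
    simp only [NNReal.smul_def, Real.coe_toNNReal _ (cgd_nonneg z)]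

end std

open MeasureTheory Real Set

section polar

theorem my_integrable_comp_polarCoord_symm_iff (f : ℝ × ℝ → ℝ) :
    Integrable f ↔
      IntegrableOn (fun p => p.1 • f (polarCoord.symm p)) polarCoord.target := by
  set B : ℝ × ℝ → ℝ × ℝ →L[ℝ] ℝ × ℝ := fun p =>
    LinearMap.toContinuousLinearMap (Matrix.toLin (Module.Basis.finTwoProd ℝ) (Module.Basis.finTwoProd ℝ)
      !![Real.cos p.2, -p.1 * Real.sin p.2; Real.sin p.2, p.1 * Real.cos p.2])
  have A : ∀ p ∈ polarCoord.target, HasFDerivWithinAt polarCoord.symm (B p) polarCoord.target p :=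
    fun p _ => (hasFDerivAt_polarCoord_symm p).hasFDerivWithinAt
  have B_det : ∀ p, (B p).det = p.1 := by
    intro p
    conv_rhs => rw [← one_mul p.1, ← cos_sq_add_sin_sq p.2]
    simp only [B, neg_mul, LinearMap.det_toContinuousLinearMap, LinearMap.det_toLin,
      Matrix.det_fin_two_of, sub_neg_eq_add]
    ring
  have hinj : InjOn polarCoord.symm polarCoord.target := polarCoord.symm.injOn
  have himg : polarCoord.symm '' polarCoord.target = polarCoord.source :=
    polarCoord.symm_image_target_eq_source
  constructor
  · intro hf
    have h1 : IntegrableOn f polarCoord.source := hf.integrableOn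
    rw [← himg] at h1
    have h2 := (integrableOn_image_iff_integrableOn_abs_det_fderiv_smul volume
      polarCoord.open_target.measurableSet A hinj f).mp h1
    refine h2.congr_fun (fun p hp => ?_) polarCoord.open_target.measurableSet
    dsimp only; rw [B_det, abs_of_pos hp.1]
  · intro hf
    have h2 : IntegrableOn (fun p => |(B p).det| • f (polarCoord.symm p)) polarCoord.target := by
      refine hf.congr_fun (fun p hp => ?_) polarCoord.open_target.measurableSet
      rw [B_det, abs_of_pos hp.1]
    have h1 := (integrableOn_image_iff_integrableOn_abs_det_fderiv_smul volume
      polarCoord.open_target.measurableSet A hinj f).mpr h2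
    rw [himg] at h1
    rw [← integrableOn_univ]
    exact h1.congr_set_ae polarCoord_source_ae_eq_univ.symm

theorem my_complex_integrable_comp_polarCoord_symm_iff (f : ℂ → ℝ) :
    Integrable f ↔
      IntegrableOn (fun p => p.1 • f (Complex.polarCoord.symm p)) polarCoord.target := by
  rw [← (Complex.volume_preserving_equiv_real_prod.symm).integrable_comp_emb
    Complex.measurableEquivRealProd.symm.measurableEmbedding,
    my_integrable_comp_polarCoord_symm_iff]
  rfl

theorem my_integrable_norm_rpow_mul_exp {q : ℝ} (hq : -2 < q) :
    Integrable (fun z : ℂ => ‖z‖ ^ q * Real.exp (-‖z‖ ^ 2)) := by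
  rw [my_complex_integrable_comp_polarCoord_symm_iff, polarCoord_target]
  have base : IntegrableOn (fun x : ℝ => x ^ (q + 1) * Real.exp (-1 * x ^ 2)) (Ioi 0) :=
    integrableOn_rpow_mul_exp_neg_mul_sq one_pos (by linarith)
  have prod : IntegrableOn
      (fun p : ℝ × ℝ => (p.1 ^ (q + 1) * Real.exp (-1 * p.1 ^ 2)) * (1 : ℝ))
      (Ioi (0:ℝ) ×ˢ Ioo (-π) π) := by
    rw [IntegrableOn, Measure.volume_eq_prod, ← Measure.prod_restrict]
    exact base.mul_prod ((integrableOn_const_iff).mpr (Or.inr measure_Ioo_lt_top))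
  refine prod.congr_fun (fun p hp => ?_)
    (measurableSet_Ioi.prod measurableSet_Ioo)
  obtain ⟨hp1, -⟩ := hp
  rw [mem_Ioi] at hp1
  simp only [smul_eq_mul, Complex.norm_polarCoord_symm]
  rw [abs_of_pos hp1, mul_one, neg_one_mul, rpow_add hp1, rpow_one]
  ring

end polar

section moments

lemma cgd_measurable : Measurable cgd := by
  unfold cgd
  exact measurable_const.mul ((measurable_norm.pow measurable_const).neg.exp)

lemma integrable_std_of_bound (f : ℂ → ℂ) (hf : AEStronglyMeasurable f (volume : Measure ℂ))
    {q : ℝ} (hq : -2 < q) (hb : ∀ z, ‖f z‖ ≤ ‖z‖ ^ q) : Integrable f stdCGaussian := by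
  rw [integrable_stdCGaussian_iff]
  refine Integrable.mono' ((my_integrable_norm_rpow_mul_exp hq).const_mul (1 / π)) ?_ ?_
  · exact cgd_measurable.aemeasurable.aestronglyMeasurable.smul hf
  · refine Filter.Eventually.of_forall fun z => ?_
    rw [norm_smul, Real.norm_eq_abs, abs_of_nonneg (cgd_nonneg z)]
    unfold cgd
    rw [mul_comm (‖z‖ ^ q) _, ← mul_assoc, mul_assoc (1/π) _ _, mul_assoc (1/π) _ _]
    gcongr
    exact hb z

lemma integrable_std_id : Integrable (fun z : ℂ => z) stdCGaussian := by
  refine integrable_std_of_bound _ measurable_id.aestronglyMeasurable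
    (by norm_num : (-2:ℝ) < 1) fun z => le_of_eq ?_
  rw [Real.rpow_one]

lemma integrable_std_conj : Integrable (fun z : ℂ => (starRingEnd ℂ) z) stdCGaussian := by
  refine integrable_std_of_bound _ Complex.continuous_conj.measurable.aestronglyMeasurable
    (by norm_num : (-2:ℝ) < 1) fun z => le_of_eq ?_
  rw [Real.rpow_one, RCLike.norm_conj]

lemma integrable_std_inv : Integrable (fun z : ℂ => z⁻¹) stdCGaussian := by
  refine integrable_std_of_bound _ measurable_inv.aestronglyMeasurable
    (by norm_num : (-2:ℝ) < -1) fun z => le_of_eq ?_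
  rw [Real.rpow_neg_one, norm_inv]

lemma integrable_std_normsq : Integrable (fun z : ℂ => (‖z‖ ^ 2 : ℝ)) stdCGaussian := by
  rw [integrable_stdCGaussian_iff_real]
  refine ((my_integrable_norm_rpow_mul_exp (by norm_num : (-2:ℝ) < 2)).const_mul
    (1 / π)).congr (Filter.Eventually.of_forall fun z => ?_)
  simp only [Real.rpow_two, smul_eq_mul, cgd]
  ring

lemma integral_std_odd (f : ℂ → ℂ) (hodd : ∀ z, f (-z) = -f z) :
    ∫ z, f z ∂stdCGaussian = 0 := by
  rw [integral_stdCGaussian]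
  have h := integral_neg_eq_self (fun z => cgd z • f z) (volume : Measure ℂ)
  have hcgd : ∀ z : ℂ, cgd (-z) = cgd z := by intro z; unfold cgd; rw [norm_neg]
  have h2 : ∫ z, cgd (-z) • f (-z) = -∫ z, cgd z • f z := by
    simp_rw [hcgd, hodd, smul_neg, integral_neg]
  have hI : (∫ z, cgd z • f z) = -∫ z, cgd z • f z := h.symm.trans h2
  linear_combination hI / 2

lemma integral_std_normsq : ∫ z, (‖z‖ ^ 2 : ℝ) ∂stdCGaussian = 1 := by
  rw [integral_stdCGaussian_real]
  have : ∀ z : ℂ, cgd z • (‖z‖ ^ 2 : ℝ) = 1 / π * (‖z‖ ^ (2:ℝ) * rexp (-‖z‖ ^ (2:ℝ))) := by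
    intro z
    simp only [Real.rpow_two, smul_eq_mul, cgd]
    ring
  simp_rw [this]
  rw [integral_const_mul, Complex.integral_rpow_mul_exp_neg_rpow one_le_two (by norm_num)]
  norm_num

end moments

section indep

open ProbabilityTheory

lemma my_indepFun_integral_mul {Ω : Type*} [MeasurableSpace Ω] {μ : Measure Ω}
    [IsProbabilityMeasure μ] {X Y : Ω → ℂ}
    (h : IndepFun X Y μ) (hX : Integrable X μ) (hY : Integrable Y μ) :
    ∫ ω, X ω * Y ω ∂μ = (∫ ω, X ω ∂μ) * ∫ ω, Y ω ∂μ := by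
  have hXY : Integrable (fun ω => X ω * Y ω) μ := h.integrable_mul hX hY
  have hXre : Integrable (fun ω => (X ω).re) μ := by simpa using hX.re
  have hXim : Integrable (fun ω => (X ω).im) μ := by simpa using hX.im
  have hYre : Integrable (fun ω => (Y ω).re) μ := by simpa using hY.re
  have hYim : Integrable (fun ω => (Y ω).im) μ := by simpa using hY.im
  have irr : IndepFun (fun ω => (X ω).re) (fun ω => (Y ω).re) μ :=
    h.comp Complex.measurable_re Complex.measurable_re
  have iri : IndepFun (fun ω => (X ω).re) (fun ω => (Y ω).im) μ :=
    h.comp Complex.measurable_re Complex.measurable_im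
  have iir : IndepFun (fun ω => (X ω).im) (fun ω => (Y ω).re) μ :=
    h.comp Complex.measurable_im Complex.measurable_re
  have iii : IndepFun (fun ω => (X ω).im) (fun ω => (Y ω).im) μ :=
    h.comp Complex.measurable_im Complex.measurable_im
  have prr : Integrable (fun ω => (X ω).re * (Y ω).re) μ := irr.integrable_mul hXre hYre
  have pri : Integrable (fun ω => (X ω).re * (Y ω).im) μ := iri.integrable_mul hXre hYim
  have pir : Integrable (fun ω => (X ω).im * (Y ω).re) μ := iir.integrable_mul hXim hYre
  have pii : Integrable (fun ω => (X ω).im * (Y ω).im) μ := iii.integrable_mul hXim hYim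
  have err : ∫ ω, (X ω).re * (Y ω).re ∂μ = (∫ ω, (X ω).re ∂μ) * ∫ ω, (Y ω).re ∂μ :=
    irr.integral_fun_mul_eq_mul_integral hXre.aestronglyMeasurable hYre.aestronglyMeasurable
  have eri : ∫ ω, (X ω).re * (Y ω).im ∂μ = (∫ ω, (X ω).re ∂μ) * ∫ ω, (Y ω).im ∂μ :=
    iri.integral_fun_mul_eq_mul_integral hXre.aestronglyMeasurable hYim.aestronglyMeasurable
  have eir : ∫ ω, (X ω).im * (Y ω).re ∂μ = (∫ ω, (X ω).im ∂μ) * ∫ ω, (Y ω).re ∂μ :=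
    iir.integral_fun_mul_eq_mul_integral hXim.aestronglyMeasurable hYre.aestronglyMeasurable
  have eii : ∫ ω, (X ω).im * (Y ω).im ∂μ = (∫ ω, (X ω).im ∂μ) * ∫ ω, (Y ω).im ∂μ :=
    iii.integral_fun_mul_eq_mul_integral hXim.aestronglyMeasurable hYim.aestronglyMeasurable
  have h3 : (∫ ω, X ω ∂μ).re = ∫ ω, (X ω).re ∂μ := by simpa using (integral_re hX).symm
  have h4 : (∫ ω, Y ω ∂μ).re = ∫ ω, (Y ω).re ∂μ := by simpa using (integral_re hY).symm
  have h5 : (∫ ω, X ω ∂μ).im = ∫ ω, (X ω).im ∂μ := by simpa using (integral_im hX).symm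
  have h6 : (∫ ω, Y ω ∂μ).im = ∫ ω, (Y ω).im ∂μ := by simpa using (integral_im hY).symm
  apply Complex.ext
  · have h1 : (∫ ω, X ω * Y ω ∂μ).re = ∫ ω, (X ω * Y ω).re ∂μ := by
      simpa using (integral_re hXY).symm
    rw [Complex.mul_re, h1, h3, h4, h5, h6]
    simp_rw [Complex.mul_re]
    rw [integral_sub prr pii, err, eii]
  · have h1 : (∫ ω, X ω * Y ω ∂μ).im = ∫ ω, (X ω * Y ω).im ∂μ := by
      simpa using (integral_im hXY).symm
    rw [Complex.mul_im, h1, h3, h4, h5, h6]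
    simp_rw [Complex.mul_im]
    rw [integral_add pri pir, eri, eir]

end indep

section transfer

lemma std_map_integrable {Ω : Type*} [MeasurableSpace Ω] {P : Measure Ω} {Z : Ω → ℂ}
    (hm : Measurable Z) (hl : Measure.map Z P = stdCGaussian) {E : Type*} [NormedAddCommGroup E]
    {f : ℂ → E} (hfm : AEStronglyMeasurable f stdCGaussian) (hint : Integrable f stdCGaussian) :
    Integrable (fun ω => f (Z ω)) P := by
  rw [← hl] at hfm hint
  exact (integrable_map_measure hfm hm.aemeasurable).mp hint

lemma std_map_integral {Ω : Type*} [MeasurableSpace Ω] {P : Measure Ω} {Z : Ω → ℂ}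
    (hm : Measurable Z) (hl : Measure.map Z P = stdCGaussian) {E : Type*} [NormedAddCommGroup E]
    [NormedSpace ℝ E] {f : ℂ → E} (hfm : AEStronglyMeasurable f stdCGaussian) :
    ∫ ω, f (Z ω) ∂P = ∫ z, f z ∂stdCGaussian := by
  rw [← hl] at hfm ⊢
  exact (integral_map hm.aemeasurable hfm).symm

end transfer

/-- Kahane's lemma: if `ζ₁, ζ₂` are centered jointly complex Gaussian (represented
via i.i.d. standard complex Gaussians `Z₁, Z₂` as `ζ₁ = αZ₁ + βZ₂`, `ζ₂ = γZ₁`)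
with `E[|ζ₂|²] ≠ 0`, then `E[ζ₁/ζ₂] = E[ζ₁ conj ζ₂] / E[|ζ₂|²]`. -/
theorem stmt4 {Ω : Type*} [MeasurableSpace Ω] (P : Measure Ω) [IsProbabilityMeasure P]
    (Z₁ Z₂ : Ω → ℂ) (hm₁ : Measurable Z₁) (hm₂ : Measurable Z₂)
    (hl₁ : Measure.map Z₁ P = stdCGaussian) (hl₂ : Measure.map Z₂ P = stdCGaussian)
    (hind : ProbabilityTheory.IndepFun Z₁ Z₂ P)
    (α β γ : ℂ) (ζ₁ ζ₂ : Ω → ℂ)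
    (hζ₁ : ζ₁ = fun ω => α * Z₁ ω + β * Z₂ ω)
    (hζ₂ : ζ₂ = fun ω => γ * Z₁ ω)
    (hvar : (∫ ω, ‖ζ₂ ω‖ ^ 2 ∂P) ≠ 0) :
    ∫ ω, ζ₁ ω / ζ₂ ω ∂P =
      (∫ ω, ζ₁ ω * (starRingEnd ℂ) (ζ₂ ω) ∂P) / ((∫ ω, ‖ζ₂ ω‖ ^ 2 ∂P : ℝ) : ℂ) := by
  have mconj : Measurable fun z : ℂ => (starRingEnd ℂ) z := Complex.continuous_conj.measurable
  have minv : Measurable fun z : ℂ => z⁻¹ := measurable_inv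
  have msq : Measurable fun z : ℂ => (‖z‖ ^ 2 : ℝ) := measurable_norm.pow measurable_const
  -- integrability under P
  have iZ₂ : Integrable Z₂ P :=
    std_map_integrable hm₂ hl₂ measurable_id.aestronglyMeasurable integrable_std_id
  have iZ₁inv : Integrable (fun ω => (Z₁ ω)⁻¹) P :=
    std_map_integrable hm₁ hl₁ minv.aestronglyMeasurable integrable_std_inv
  have iZ₁conj : Integrable (fun ω => (starRingEnd ℂ) (Z₁ ω)) P :=
    std_map_integrable hm₁ hl₁ mconj.aestronglyMeasurable integrable_std_conj
  have iZ₁sq : Integrable (fun ω => (‖Z₁ ω‖ ^ 2 : ℝ)) P :=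
    std_map_integrable hm₁ hl₁ msq.aestronglyMeasurable integrable_std_normsq
  -- expectations
  have eZ₂ : ∫ ω, Z₂ ω ∂P = 0 :=
    (std_map_integral (f := fun z : ℂ => z) hm₂ hl₂
      measurable_id.aestronglyMeasurable).trans (integral_std_odd _ fun z => rfl)
  have eZ₁inv : ∫ ω, (Z₁ ω)⁻¹ ∂P = 0 :=
    (std_map_integral (f := fun z : ℂ => z⁻¹) hm₁ hl₁
      minv.aestronglyMeasurable).trans (integral_std_odd _ fun z => inv_neg)
  have eZ₁conj : ∫ ω, (starRingEnd ℂ) (Z₁ ω) ∂P = 0 :=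
    (std_map_integral (f := fun z : ℂ => (starRingEnd ℂ) z) hm₁ hl₁
      mconj.aestronglyMeasurable).trans (integral_std_odd _ fun z => map_neg _ z)
  have eZ₁sq : ∫ ω, (‖Z₁ ω‖ ^ 2 : ℝ) ∂P = 1 := by
    rw [std_map_integral hm₁ hl₁ msq.aestronglyMeasurable]
    exact integral_std_normsq
  -- rewrite the goal
  simp only [hζ₁, hζ₂]
  simp only [hζ₂] at hvar
  -- denominator
  have hden : (∫ ω, ‖γ * Z₁ ω‖ ^ 2 ∂P : ℝ) = ‖γ‖ ^ 2 := by
    simp_rw [norm_mul, mul_pow]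
    rw [integral_const_mul, eZ₁sq, mul_one]
  have hγ : γ ≠ 0 := by
    intro h0
    rw [hden, h0] at hvar
    simp at hvar
  have hγc : (starRingEnd ℂ) γ ≠ 0 := star_ne_zero.mpr hγ
  -- a.e. nonvanishing
  have hZ₁ne : ∀ᵐ ω ∂P, Z₁ ω ≠ 0 := by
    have h0 : P (Z₁ ⁻¹' {0}) = 0 := by
      have hmap := Measure.map_apply (μ := P) hm₁ (measurableSet_singleton (0 : ℂ))
      rw [hl₁] at hmap
      rw [← hmap, stdCGaussian_eq, withDensity_apply _ (measurableSet_singleton _),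
        setLIntegral_measure_zero _ _ (measure_singleton 0)]
    rw [ae_iff]
    simp only [not_not]; exact h0
  -- independence products
  have indinv : ProbabilityTheory.IndepFun Z₂ (fun ω => (Z₁ ω)⁻¹) P :=
    hind.symm.comp measurable_id minv
  have indconj : ProbabilityTheory.IndepFun Z₂ (fun ω => (starRingEnd ℂ) (Z₁ ω)) P :=
    hind.symm.comp measurable_id mconj
  have pinv : Integrable (fun ω => Z₂ ω * (Z₁ ω)⁻¹) P := indinv.integrable_mul iZ₂ iZ₁inv
  have pconj : Integrable (fun ω => Z₂ ω * (starRingEnd ℂ) (Z₁ ω)) P :=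
    indconj.integrable_mul iZ₂ iZ₁conj
  have einv : ∫ ω, Z₂ ω * (Z₁ ω)⁻¹ ∂P = 0 := by
    rw [my_indepFun_integral_mul indinv iZ₂ iZ₁inv, eZ₂, zero_mul]
  have econj : ∫ ω, Z₂ ω * (starRingEnd ℂ) (Z₁ ω) ∂P = 0 := by
    rw [my_indepFun_integral_mul indconj iZ₂ iZ₁conj, eZ₂, zero_mul]
  -- LHS
  have hLHS : ∫ ω, (α * Z₁ ω + β * Z₂ ω) / (γ * Z₁ ω) ∂P = α / γ := by
    have hcong : ∀ᵐ ω ∂P, (α * Z₁ ω + β * Z₂ ω) / (γ * Z₁ ω)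
        = α / γ + (β / γ) * (Z₂ ω * (Z₁ ω)⁻¹) := by
      filter_upwards [hZ₁ne] with ω hω
      field_simp
    rw [integral_congr_ae hcong, integral_add (integrable_const _) (pinv.const_mul _),
      integral_const, integral_const_mul, einv]
    simp
  -- numerator
  have hmc : ∀ w : ℂ, w * (starRingEnd ℂ) w = ((‖w‖ ^ 2 : ℝ) : ℂ) := by
    intro w
    rw [Complex.mul_conj, Complex.normSq_eq_norm_sq]
  have hnum : ∫ ω, (α * Z₁ ω + β * Z₂ ω) * (starRingEnd ℂ) (γ * Z₁ ω) ∂P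
      = α * (starRingEnd ℂ) γ := by
    have hptw : ∀ ω, (α * Z₁ ω + β * Z₂ ω) * (starRingEnd ℂ) (γ * Z₁ ω)
        = (α * (starRingEnd ℂ) γ) * ((‖Z₁ ω‖ ^ 2 : ℝ) : ℂ)
          + (β * (starRingEnd ℂ) γ) * (Z₂ ω * (starRingEnd ℂ) (Z₁ ω)) := by
      intro ω
      rw [map_mul, ← hmc (Z₁ ω)]
      ring
    have iC : Integrable (fun ω => ((‖Z₁ ω‖ ^ 2 : ℝ) : ℂ)) P := iZ₁sq.ofReal
    have eC : ∫ ω, ((‖Z₁ ω‖ ^ 2 : ℝ) : ℂ) ∂P = ((∫ ω, (‖Z₁ ω‖ ^ 2 : ℝ) ∂P : ℝ) : ℂ) :=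
      integral_ofReal
    simp_rw [hptw]
    rw [integral_add (iC.const_mul _) (pconj.const_mul _), integral_const_mul,
      integral_const_mul, econj, mul_zero, add_zero, eC, eZ₁sq]
    simp
  rw [hLHS, hnum, hden, show ((‖γ‖ ^ 2 : ℝ) : ℂ) = γ * (starRingEnd ℂ) γ from (hmc γ).symm]
  field_simp
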